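/- Let G be a connected finite graph and let P be a set of exactly k ≥ 3 longest paths of G with f(G,P) > 0. Then for every path P ∈ P there exist two edge-disjoint good paths on P (equivalently: if some P ∈ P admits a good path but no two edge-disjoint good paths, i.e., t'_P(P) = 1, then f(G,P) = 0). -/

import Mathlib

open SimpleGraph

/-- `w` is a longest path of `G`: it is a path and no path of `G` is longer. -/
def IsLongestPath {V : Type*} (G : SimpleGraph V) {u v : V} (w : G.Walk u v) : Prop :=
  w.IsPath ∧ ∀ (a b : V) (q : G.Walk a b), q.IsPath → q.length ≤ w.length

/-- The distance `d_G(x, V(w))` from a vertex `x` to the vertex set of a walk `w`. -/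
noncomputable def distToWalk {V : Type*} (G : SimpleGraph V) (x : V) {u v : V}
    (w : G.Walk u v) : ℕ :=
  sInf {d : ℕ | ∃ y ∈ w.support, G.dist x y = d}

/-- The path-distance-function `f(G, 𝒫)` of a family `𝒫` of paths of `G`. -/
noncomputable def pdf {V : Type*} (G : SimpleGraph V) {k : ℕ}
    (P : Fin k → Σ u : V, Σ v : V, G.Walk u v) : ℕ :=
  sInf {s : ℕ | ∃ x : V, s = ∑ i, distToWalk G x (P i).2.2}

/-- `Q` is an infix (subpath) of the walk `W`. -/
def IsInfixOf {V : Type*} (G : SimpleGraph V) {a b u v : V} (Q : G.Walk a b)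
    (W : G.Walk u v) : Prop :=
  ∃ (w₁ : G.Walk u a) (w₂ : G.Walk b v), W = (w₁.append Q).append w₂

/-- `Q` is a good path on the member `P i0` of the family `P`: it is a subpath of `P i0`,
its end-vertices lie on two distinct other members `P i` and `P j`, it meets every other
member of the family, and no internal vertex of `Q` lies on `P i` or `P j`. -/
def IsGoodPath {V : Type*} (G : SimpleGraph V) {k : ℕ}
    (P : Fin k → Σ u : V, Σ v : V, G.Walk u v) (i0 : Fin k) {a b : V}
    (Q : G.Walk a b) : Prop :=
  IsInfixOf G Q (P i0).2.2 ∧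
  ∃ i j : Fin k, i ≠ i0 ∧ j ≠ i0 ∧ i ≠ j ∧
    a ∈ (P i).2.2.support ∧ b ∈ (P j).2.2.support ∧
    (∀ m : Fin k, m ≠ i0 → ∃ x ∈ Q.support, x ∈ (P m).2.2.support) ∧
    (∀ x ∈ Q.support, x ≠ a → x ≠ b →
      x ∉ (P i).2.2.support ∧ x ∉ (P j).2.2.support)

/-- `t'_𝒫(P i0)`: the maximum number of pairwise edge-disjoint good paths on `P i0`. -/
noncomputable def tprime {V : Type*} (G : SimpleGraph V) {k : ℕ}
    (P : Fin k → Σ u : V, Σ v : V, G.Walk u v) (i0 : Fin k) : ℕ :=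
  sSup {n : ℕ | ∃ Qs : Fin n → Σ a : V, Σ b : V, G.Walk a b,
    Function.Injective Qs ∧ (∀ t, IsGoodPath G P i0 (Qs t).2.2) ∧
    Pairwise fun s t => ∀ e ∈ (Qs s).2.2.edges, e ∉ (Qs t).2.2.edges}

open SimpleGraph

namespace LongestAux

open SimpleGraph.Walk

variable {V : Type*} {G : SimpleGraph V}

lemma support_eq_map {u v : V} (p : G.Walk u v) :
    p.support = (List.range (p.length + 1)).map p.getVert := by
  induction p with
  | nil => simp [List.range_succ]
  | cons h q ih =>
    rw [Walk.support_cons, Walk.length_cons, List.range_succ_eq_map, List.map_cons,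
      List.map_map, ih]
    refine congrArg₂ _ rfl ?_
    apply List.map_congr_left
    intro i _
    simp [Function.comp, Walk.getVert_cons_succ]

lemma getVert_inj {u v : V} {p : G.Walk u v} (hp : p.IsPath) {i j : ℕ}
    (hi : i ≤ p.length) (hj : j ≤ p.length) (h : p.getVert i = p.getVert j) : i = j := by
  have hnd := hp.support_nodup
  rw [support_eq_map] at hnd
  have hi' : i < ((List.range (p.length + 1)).map p.getVert).length := by
    simpa using Nat.lt_succ_of_le hi
  have hj' : j < ((List.range (p.length + 1)).map p.getVert).length := by
    simpa using Nat.lt_succ_of_le hj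
  have h1 : ((List.range (p.length + 1)).map p.getVert)[i]'hi' =
      ((List.range (p.length + 1)).map p.getVert)[j]'hj' := by
    simpa using h
  exact hnd.getElem_inj_iff.mp h1

lemma isPath_append {u v w : V} {p : G.Walk u v} {q : G.Walk v w}
    (hp : p.IsPath) (hq : q.IsPath) (hint : ∀ x, x ∈ p.support → x ∈ q.support → x = v) :
    (p.append q).IsPath := by
  rw [Walk.isPath_def, Walk.support_append, List.nodup_append]
  have hqn := hq.support_nodup
  rw [q.support_eq_cons, List.nodup_cons] at hqn
  refine ⟨hp.support_nodup, hqn.2, ?_⟩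
  intro x hx y hx' hxy
  subst hxy
  have hxq : x ∈ q.support := by
    rw [q.support_eq_cons]
    exact List.mem_cons_of_mem _ hx'
  exact hqn.1 ((hint x hx hxq) ▸ hx')

variable [DecidableEq V]

lemma length_take_add_drop {u v x : V} (p : G.Walk u v) (h : x ∈ p.support) :
    (p.takeUntil x h).length + (p.dropUntil x h).length = p.length := by
  have := congrArg Walk.length (Walk.take_spec p h)
  rwa [Walk.length_append] at this

lemma getVert_takeUntil {u v x : V} {p : G.Walk u v} (h : x ∈ p.support) {j : ℕ}
    (hj : j ≤ (p.takeUntil x h).length) : (p.takeUntil x h).getVert j = p.getVert j := by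
  conv_rhs => rw [← Walk.take_spec p h]
  rw [Walk.getVert_append]
  rcases eq_or_lt_of_le hj with h' | h'
  · rw [if_neg (by omega), h', Nat.sub_self, Walk.getVert_zero, Walk.getVert_length]
  · rw [if_pos h']

lemma getVert_dropUntil {u v x : V} {p : G.Walk u v} (h : x ∈ p.support) (j : ℕ) :
    (p.dropUntil x h).getVert j = p.getVert ((p.takeUntil x h).length + j) := by
  obtain ⟨t, ht⟩ : ∃ t, (p.takeUntil x h).length = t := ⟨_, rfl⟩
  rw [ht]
  conv_rhs => rw [← Walk.take_spec p h]
  rw [Walk.getVert_append, ht, if_neg (by omega), Nat.add_sub_cancel_left]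

lemma length_takeUntil_getVert {u v : V} {p : G.Walk u v} (hp : p.IsPath) {i : ℕ}
    (hi : i ≤ p.length) (h : p.getVert i ∈ p.support) :
    (p.takeUntil (p.getVert i) h).length = i := by
  have h1 : (p.takeUntil (p.getVert i) h).getVert ((p.takeUntil (p.getVert i) h).length) =
      p.getVert ((p.takeUntil (p.getVert i) h).length) := getVert_takeUntil h le_rfl
  rw [Walk.getVert_length] at h1
  exact (getVert_inj hp hi (Walk.length_takeUntil_le p h) h1).symm

lemma mem_support_dropUntil_iff {u v : V} {p : G.Walk u v} (hp : p.IsPath) {i : ℕ}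
    (hi : i ≤ p.length) (h : p.getVert i ∈ p.support) {y : V} :
    y ∈ (p.dropUntil (p.getVert i) h).support ↔
      ∃ j, i ≤ j ∧ j ≤ p.length ∧ p.getVert j = y := by
  have ht := length_takeUntil_getVert hp hi h
  have hlen := length_take_add_drop p h
  constructor
  · intro hy
    obtain ⟨m, hm1, hm2⟩ := Walk.mem_support_iff_exists_getVert.mp hy
    refine ⟨i + m, Nat.le_add_right _ _, by omega, ?_⟩
    rw [← hm1, getVert_dropUntil h m, ht]
  · rintro ⟨j, hij, hjn, rfl⟩
    rw [Walk.mem_support_iff_exists_getVert]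
    refine ⟨j - i, ?_, by omega⟩
    rw [getVert_dropUntil h (j - i), ht]
    congr 1
    omega

lemma mem_support_takeUntil_iff {u v : V} {p : G.Walk u v} (hp : p.IsPath) {i : ℕ}
    (hi : i ≤ p.length) (h : p.getVert i ∈ p.support) {y : V} :
    y ∈ (p.takeUntil (p.getVert i) h).support ↔ ∃ j, j ≤ i ∧ p.getVert j = y := by
  have ht := length_takeUntil_getVert hp hi h
  constructor
  · intro hy
    obtain ⟨m, hm1, hm2⟩ := Walk.mem_support_iff_exists_getVert.mp hy
    exact ⟨m, ht ▸ hm2, by rw [← hm1, getVert_takeUntil h hm2]⟩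
  · rintro ⟨j, hij, rfl⟩
    rw [Walk.mem_support_iff_exists_getVert]
    exact ⟨j, getVert_takeUntil h (by omega), by omega⟩

lemma segment {u v : V} {p : G.Walk u v} (hp : p.IsPath) {a b : ℕ}
    (hab : a ≤ b) (hb : b ≤ p.length) :
    ∃ Q : G.Walk (p.getVert a) (p.getVert b),
      IsInfixOf G Q p ∧ Q.IsPath ∧
      (∀ y, y ∈ Q.support ↔ ∃ j, a ≤ j ∧ j ≤ b ∧ p.getVert j = y) := by
  have hbmem : p.getVert b ∈ p.support :=
    Walk.mem_support_iff_exists_getVert.mpr ⟨b, rfl, hb⟩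
  set T := p.takeUntil (p.getVert b) hbmem with hT
  have hTpath : T.IsPath := hp.takeUntil hbmem
  have hTlen : T.length = b := length_takeUntil_getVert hp hb hbmem
  have hTlen' : (p.takeUntil (p.getVert b) hbmem).length = b := hTlen
  have hva : p.getVert a = T.getVert a := (getVert_takeUntil hbmem (by omega)).symm
  have hamem : T.getVert a ∈ T.support :=
    Walk.mem_support_iff_exists_getVert.mpr ⟨a, rfl, by omega⟩
  rw [hva]
  refine ⟨T.dropUntil (T.getVert a) hamem, ?_, hTpath.dropUntil hamem, ?_⟩
  · refine ⟨T.takeUntil (T.getVert a) hamem, p.dropUntil (p.getVert b) hbmem, ?_⟩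
    rw [Walk.take_spec T hamem, hT, Walk.take_spec p hbmem]
  · intro y
    rw [mem_support_dropUntil_iff hTpath (by omega) hamem]
    constructor
    · rintro ⟨j, hj1, hj2, rfl⟩
      exact ⟨j, hj1, by omega, (getVert_takeUntil hbmem (by omega)).symm⟩
    · rintro ⟨j, hj1, hj2, rfl⟩
      exact ⟨j, hj1, by omega, getVert_takeUntil hbmem (by omega)⟩

lemma armBound {n : ℕ} {u v a b : V} {p : G.Walk u v} {q : G.Walk a b}
    (hp : p.IsPath) (hq : q.IsPath) (hpl : p.length = n) (hql : q.length = n)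
    (hmax : ∀ (x y : V) (w : G.Walk x y), w.IsPath → w.length ≤ n)
    {i : ℕ} (hi : i ≤ n) (hmem : p.getVert i ∈ q.support)
    (hright : ∀ j, i < j → j ≤ n → p.getVert j ∉ q.support) :
    n ≤ 2 * i := by
  have hi' : i ≤ p.length := by omega
  have hpsup : p.getVert i ∈ p.support :=
    Walk.mem_support_iff_exists_getVert.mpr ⟨i, rfl, hi'⟩
  set D := (p.dropUntil (p.getVert i) hpsup).reverse with hD
  have hDpath : D.IsPath := (hp.dropUntil hpsup).reverse
  have hDlen : D.length = n - i := by
    rw [hD, Walk.length_reverse]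
    have h1 := length_take_add_drop p hpsup
    have h2 := length_takeUntil_getVert hp hi' hpsup
    omega
  have hDsup : ∀ y, y ∈ D.support → y ∈ q.support → y = p.getVert i := by
    intro y hy hyq
    rw [hD, Walk.support_reverse, List.mem_reverse] at hy
    obtain ⟨j, hj1, hj2, rfl⟩ := (mem_support_dropUntil_iff hp hi' hpsup).mp hy
    rcases eq_or_lt_of_le hj1 with h' | h'
    · rw [← h']
    · exact absurd hyq (hright j h' (by omega))
  have hq1 : (D.append (q.takeUntil (p.getVert i) hmem).reverse).IsPath := by
    refine isPath_append hDpath (hq.takeUntil hmem).reverse ?_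
    intro x hx hx'
    refine hDsup x hx ?_
    rw [Walk.support_reverse, List.mem_reverse] at hx'
    exact q.support_takeUntil_subset hmem hx'
  have hq2 : (D.append (q.dropUntil (p.getVert i) hmem)).IsPath := by
    refine isPath_append hDpath (hq.dropUntil hmem) ?_
    intro x hx hx'
    exact hDsup x hx (q.support_dropUntil_subset hmem hx')
  have h1 := hmax _ _ _ hq1
  have h2 := hmax _ _ _ hq2
  simp only [Walk.length_append, Walk.length_reverse, hD] at h1 h2
  have h3 := length_take_add_drop q hmem
  have h4 := length_take_add_drop p hpsup
  have h5 := length_takeUntil_getVert hp hi' hpsup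
  omega

lemma armBoundLeft {n : ℕ} {u v a b : V} {p : G.Walk u v} {q : G.Walk a b}
    (hp : p.IsPath) (hq : q.IsPath) (hpl : p.length = n) (hql : q.length = n)
    (hmax : ∀ (x y : V) (w : G.Walk x y), w.IsPath → w.length ≤ n)
    {i : ℕ} (hi : i ≤ n) (hmem : p.getVert i ∈ q.support)
    (hleft : ∀ j, j < i → p.getVert j ∉ q.support) :
    2 * i ≤ n := by
  have hrl : p.reverse.length = n := by rw [Walk.length_reverse]; exact hpl
  have hkey : n ≤ 2 * (n - i) := by
    refine armBound hp.reverse hq hrl hql hmax (i := n - i) (by omega) ?_ ?_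
    · rw [Walk.getVert_reverse]
      have : p.length - (n - i) = i := by omega
      rwa [this]
    · intro j hj1 hj2
      rw [Walk.getVert_reverse]
      have : p.length - j = n - j := by omega
      rw [this]
      exact hleft (n - j) (by omega)
  omega

lemma longest_intersect (hG : G.Connected) {n : ℕ} {u v a b : V} {p : G.Walk u v}
    {q : G.Walk a b} (hp : p.IsPath) (hq : q.IsPath) (hpl : p.length = n)
    (hql : q.length = n)
    (hmax : ∀ (x y : V) (w : G.Walk x y), w.IsPath → w.length ≤ n) :
    ∃ x, x ∈ p.support ∧ x ∈ q.support := by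
  by_contra hdisj
  push_neg at hdisj
  set S : Set ℕ :=
    {ℓ | ∃ (c d : V), c ∈ p.support ∧ d ∈ q.support ∧ ∃ R : G.Walk c d, R.length = ℓ} with hSdef
  have hSne : S.Nonempty := by
    obtain ⟨R⟩ := hG.preconnected u a
    exact ⟨R.length, u, a, p.start_mem_support, q.start_mem_support, R, rfl⟩
  obtain ⟨c, d, hc, hd, R, hR⟩ := Nat.sInf_mem hSne
  have hbmem : R.bypass.length ∈ S := ⟨c, d, hc, hd, R.bypass, rfl⟩
  have hb1 : R.bypass.length = sInf S :=
    le_antisymm (hR ▸ R.length_bypass_le) (Nat.sInf_le hbmem)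
  set R' := R.bypass with hR'
  have hR'path : R'.IsPath := R.bypass_isPath
  have claim1 : ∀ x ∈ R'.support, x ∈ p.support → x = c := by
    intro x hx hxp
    by_contra hne
    have h1 : (R'.dropUntil x hx).length ∈ S := ⟨x, d, hxp, hd, _, rfl⟩
    have h2 := Nat.sInf_le h1
    have h3 := length_take_add_drop R' hx
    have h4 : (R'.takeUntil x hx).length ≠ 0 := fun h0 =>
      hne (Walk.eq_of_length_eq_zero h0).symm
    omega
  have claim2 : ∀ x ∈ R'.support, x ∈ q.support → x = d := by
    intro x hx hxq
    by_contra hne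
    have h1 : (R'.takeUntil x hx).length ∈ S := ⟨c, x, hc, hxq, _, rfl⟩
    have h2 := Nat.sInf_le h1
    have h3 := length_take_add_drop R' hx
    have h4 : (R'.dropUntil x hx).length ≠ 0 := fun h0 =>
      hne (Walk.eq_of_length_eq_zero h0)
    omega
  have hcd : c ≠ d := fun h => hdisj c hc (h ▸ hd)
  have hlen1 : 1 ≤ R'.length := by
    rcases Nat.eq_zero_or_pos R'.length with h | h
    · exact absurd (Walk.eq_of_length_eq_zero h) hcd
    · omega
  have hW1 : ((p.takeUntil c hc).append R').append (q.dropUntil d hd) |>.IsPath := by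
    refine isPath_append (isPath_append (hp.takeUntil hc) hR'path ?_) (hq.dropUntil hd) ?_
    · intro x hx hx'
      exact claim1 x hx' (p.support_takeUntil_subset hc hx)
    · intro x hx hx'
      rw [Walk.mem_support_append_iff] at hx
      rcases hx with hx | hx
      · exact absurd (q.support_dropUntil_subset hd hx') (hdisj x (p.support_takeUntil_subset hc hx))
      · exact claim2 x hx (q.support_dropUntil_subset hd hx')
  have hW2 : (((p.dropUntil c hc).reverse.append R').append (q.takeUntil d hd).reverse).IsPath := by
    refine isPath_append (isPath_append (hp.dropUntil hc).reverse hR'path ?_) (hq.takeUntil hd).reverse ?_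
    · intro x hx hx'
      have hxp : x ∈ p.support := by
        rw [Walk.support_reverse, List.mem_reverse] at hx
        exact p.support_dropUntil_subset hc hx
      exact claim1 x hx' hxp
    · intro x hx hx'
      have hxq : x ∈ q.support := by
        rw [Walk.support_reverse, List.mem_reverse] at hx'
        exact q.support_takeUntil_subset hd hx'
      rw [Walk.mem_support_append_iff] at hx
      rcases hx with hx | hx
      · have hxp : x ∈ p.support := by
          rw [Walk.support_reverse, List.mem_reverse] at hx
          exact p.support_dropUntil_subset hc hx
        exact absurd hxq (hdisj x hxp)
      · exact claim2 x hx hxq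
  have h1 := hmax _ _ _ hW1
  have h2 := hmax _ _ _ hW2
  simp only [Walk.length_append, Walk.length_reverse] at h1 h2
  have h3 := length_take_add_drop p hc
  have h4 := length_take_add_drop q hd
  omega

end LongestAux


/-- Lemma 5: if `f(G,𝒫) > 0`, then every path of `𝒫` carries two distinct
edge-disjoint good paths (equivalently, `t'_𝒫(P) = 1` forces `f(G,𝒫) = 0`). -/
theorem lemma_two_edge_disjoint_good_paths {V : Type*} [Fintype V] (G : SimpleGraph V)
    (hG : G.Connected) (k : ℕ) (hk : 3 ≤ k)
    (P : Fin k → Σ u : V, Σ v : V, G.Walk u v)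
    (hinj : Function.Injective P) (hlong : ∀ i, IsLongestPath G (P i).2.2)
    (hf : 0 < pdf G P) (i0 : Fin k) :
    ∃ (a b : V) (Q₁ : G.Walk a b) (c d : V) (Q₂ : G.Walk c d),
      IsGoodPath G P i0 Q₁ ∧ IsGoodPath G P i0 Q₂ ∧
      (⟨a, ⟨b, Q₁⟩⟩ : Σ u : V, Σ v : V, G.Walk u v) ≠ ⟨c, ⟨d, Q₂⟩⟩ ∧
      ∀ e ∈ Q₁.edges, e ∉ Q₂.edges := by
    classical
  set p : G.Walk (P i0).1 (P i0).2.1 := (P i0).2.2 with hpdef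
  have hppath : p.IsPath := (hlong i0).1
  set n := p.length with hn
  have hmax : ∀ (x y : V) (w : G.Walk x y), w.IsPath → w.length ≤ n :=
    fun x y w hw => (hlong i0).2 x y w hw
  have hplen : ∀ m, (P m).2.2.length = n := fun m =>
    le_antisymm (hmax _ _ _ (hlong m).1) ((hlong m).2 _ _ p hppath)
  have hnocommon : ∀ x : V, ¬ ∀ i, x ∈ (P i).2.2.support := by
    intro x hx
    have hdz : ∀ i : Fin k, distToWalk G x (P i).2.2 = 0 := by
      intro i
      have h0 : (0 : ℕ) ∈ {d : ℕ | ∃ y ∈ (P i).2.2.support, G.dist x y = d} :=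
        ⟨x, hx i, SimpleGraph.dist_self⟩
      exact Nat.le_zero.mp (Nat.sInf_le h0)
    have h0 : (0 : ℕ) ∈ {s : ℕ | ∃ x : V, s = ∑ i, distToWalk G x (P i).2.2} :=
      ⟨x, by simp [hdz]⟩
    have hple : pdf G P ≤ 0 := Nat.sInf_le h0
    omega
  have hk2 : 1 < Fintype.card (Fin k) := by simp; omega
  obtain ⟨m0, hm0⟩ := Fintype.exists_ne_of_one_lt_card hk2 i0
  set S : Fin k → Finset ℕ :=
    fun m => (Finset.range (n + 1)).filter (fun s => p.getVert s ∈ (P m).2.2.support) with hSdef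
  have hmemS : ∀ m s, s ∈ S m ↔ s ≤ n ∧ p.getVert s ∈ (P m).2.2.support := by
    intro m s
    simp only [hSdef, Finset.mem_filter, Finset.mem_range, Nat.lt_succ_iff]
  have hSne : ∀ m, m ≠ i0 → (S m).Nonempty := by
    intro m hm
    obtain ⟨x, hxp, hxq⟩ :=
      LongestAux.longest_intersect hG hppath (hlong m).1 hn.symm (hplen m) hmax
    obtain ⟨s, hs1, hs2⟩ := SimpleGraph.Walk.mem_support_iff_exists_getVert.mp hxp
    exact ⟨s, (hmemS m s).mpr ⟨by omega, hs1 ▸ hxq⟩⟩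
  set M : Finset (Fin k) := Finset.univ.filter (· ≠ i0) with hMdef
  have hmemM : ∀ m, m ∈ M ↔ m ≠ i0 := by intro m; simp [hMdef]
  have hMne : M.Nonempty := ⟨m0, (hmemM m0).mpr hm0⟩
  set gmin : Fin k → ℕ :=
    fun m => if h : (S m).Nonempty then (S m).min' h else 0 with hgmindef
  set gmax : Fin k → ℕ :=
    fun m => if h : (S m).Nonempty then (S m).max' h else 0 with hgmaxdef
  have hgmin_mem : ∀ m ∈ M, gmin m ∈ S m := by
    intro m hm
    simp only [hgmindef, dif_pos (hSne m ((hmemM m).mp hm))]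
    exact Finset.min'_mem _ _
  have hgmin_le : ∀ m ∈ M, ∀ s ∈ S m, gmin m ≤ s := by
    intro m hm s hs
    simp only [hgmindef, dif_pos (hSne m ((hmemM m).mp hm))]
    exact Finset.min'_le _ _ hs
  have hgmax_mem : ∀ m ∈ M, gmax m ∈ S m := by
    intro m hm
    simp only [hgmaxdef, dif_pos (hSne m ((hmemM m).mp hm))]
    exact Finset.max'_mem _ _
  have hle_gmax : ∀ m ∈ M, ∀ s ∈ S m, s ≤ gmax m := by
    intro m hm s hs
    simp only [hgmaxdef, dif_pos (hSne m ((hmemM m).mp hm))]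
    exact Finset.le_max' _ _ hs
  have hsep : ∀ m ∈ M, ∀ m' ∈ M, gmin m ≤ gmax m' := by
    intro m hm m' hm'
    have hmS := (hmemS _ _).mp (hgmin_mem m hm)
    have hmS' := (hmemS _ _).mp (hgmax_mem m' hm')
    have h1 : 2 * gmin m ≤ n := by
      refine LongestAux.armBoundLeft hppath (hlong m).1 hn.symm (hplen m) hmax hmS.1 hmS.2 ?_
      intro j hj hjmem
      have hjS : j ∈ S m := (hmemS m j).mpr ⟨by omega, hjmem⟩
      have := hgmin_le m hm j hjS
      omega
    have h2 : n ≤ 2 * gmax m' := by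
      refine LongestAux.armBound hppath (hlong m').1 hn.symm (hplen m') hmax hmS'.1 hmS'.2 ?_
      intro j hj1 hj2 hjmem
      have hjS : j ∈ S m' := (hmemS m' j).mpr ⟨hj2, hjmem⟩
      have := hle_gmax m' hm' j hjS
      omega
    omega
  obtain ⟨j₁, hj₁M, hj₁⟩ := M.exists_max_image gmin hMne
  obtain ⟨i₂, hi₂M, hi₂⟩ := M.exists_min_image gmax hMne
  set T₁ : Fin k → Finset ℕ := fun m => (S m).filter (fun s => s ≤ gmin j₁) with hT₁def
  have hT₁ne : ∀ m ∈ M, (T₁ m).Nonempty := by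
    intro m hm
    refine ⟨gmin m, ?_⟩
    simp only [hT₁def, Finset.mem_filter]
    exact ⟨hgmin_mem m hm, hj₁ m hm⟩
  set g₁ : Fin k → ℕ := fun m => if h : (T₁ m).Nonempty then (T₁ m).max' h else 0 with hg₁def
  have hg₁_mem : ∀ m ∈ M, g₁ m ∈ S m ∧ g₁ m ≤ gmin j₁ := by
    intro m hm
    have h1 : g₁ m ∈ T₁ m := by
      simp only [hg₁def, dif_pos (hT₁ne m hm)]
      exact Finset.max'_mem _ _
    simpa only [hT₁def, Finset.mem_filter] using h1
  have hg₁_ge : ∀ m ∈ M, ∀ s ∈ S m, s ≤ gmin j₁ → s ≤ g₁ m := by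
    intro m hm s hs hsle
    have h1 : s ∈ T₁ m := by
      simp only [hT₁def, Finset.mem_filter]
      exact ⟨hs, hsle⟩
    simp only [hg₁def, dif_pos (hT₁ne m hm)]
    exact Finset.le_max' _ _ h1
  obtain ⟨i₁, hi₁M, hi₁⟩ := M.exists_min_image g₁ hMne
  set T₂ : Fin k → Finset ℕ := fun m => (S m).filter (fun s => gmax i₂ ≤ s) with hT₂def
  have hT₂ne : ∀ m ∈ M, (T₂ m).Nonempty := by
    intro m hm
    refine ⟨gmax m, ?_⟩
    simp only [hT₂def, Finset.mem_filter]
    exact ⟨hgmax_mem m hm, hi₂ m hm⟩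
  set g₂ : Fin k → ℕ := fun m => if h : (T₂ m).Nonempty then (T₂ m).min' h else 0 with hg₂def
  have hg₂_mem : ∀ m ∈ M, g₂ m ∈ S m ∧ gmax i₂ ≤ g₂ m := by
    intro m hm
    have h1 : g₂ m ∈ T₂ m := by
      simp only [hg₂def, dif_pos (hT₂ne m hm)]
      exact Finset.min'_mem _ _
    simpa only [hT₂def, Finset.mem_filter] using h1
  have hg₂_le : ∀ m ∈ M, ∀ s ∈ S m, gmax i₂ ≤ s → g₂ m ≤ s := by
    intro m hm s hs hsge
    have h1 : s ∈ T₂ m := by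
      simp only [hT₂def, Finset.mem_filter]
      exact ⟨hs, hsge⟩
    simp only [hg₂def, dif_pos (hT₂ne m hm)]
    exact Finset.min'_le _ _ h1
  obtain ⟨j₂, hj₂M, hj₂⟩ := M.exists_max_image g₂ hMne
  set b₁ := gmin j₁ with hb₁def
  set a₂ := gmax i₂ with ha₂def
  set a₁ := g₁ i₁ with ha₁def
  set b₂ := g₂ j₂ with hb₂def
  have hb₁a₂ : b₁ ≤ a₂ := hsep j₁ hj₁M i₂ hi₂M
  have ha₁b₁ : a₁ ≤ b₁ := (hg₁_mem i₁ hi₁M).2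
  have ha₂b₂ : a₂ ≤ b₂ := (hg₂_mem j₂ hj₂M).2
  have hb₁S : b₁ ∈ S j₁ := hgmin_mem j₁ hj₁M
  have ha₂S : a₂ ∈ S i₂ := hgmax_mem i₂ hi₂M
  have ha₁S : a₁ ∈ S i₁ := (hg₁_mem i₁ hi₁M).1
  have hb₂S : b₂ ∈ S j₂ := (hg₂_mem j₂ hj₂M).1
  have hb₁n : b₁ ≤ n := ((hmemS _ _).mp hb₁S).1
  have hb₂n : b₂ ≤ n := ((hmemS _ _).mp hb₂S).1
  have meets₁ : ∀ m ∈ M, a₁ ≤ g₁ m ∧ g₁ m ≤ b₁ ∧ g₁ m ∈ S m :=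
    fun m hm => ⟨hi₁ m hm, (hg₁_mem m hm).2, (hg₁_mem m hm).1⟩
  have meets₂ : ∀ m ∈ M, a₂ ≤ g₂ m ∧ g₂ m ≤ b₂ ∧ g₂ m ∈ S m :=
    fun m hm => ⟨(hg₂_mem m hm).2, hj₂ m hm, (hg₂_mem m hm).1⟩
  have hcommon' : ∀ t : ℕ, (∀ m ∈ M, t ∈ S m) → False := by
    intro t hall
    have htn : t ≤ n := ((hmemS _ _).mp (hall m0 ((hmemM m0).mpr hm0))).1
    refine hnocommon (p.getVert t) fun i => ?_
    by_cases hi : i = i0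
    · subst hi
      exact SimpleGraph.Walk.mem_support_iff_exists_getVert.mpr
        ⟨t, rfl, by have := hplen i; omega⟩
    · exact ((hmemS _ _).mp (hall i ((hmemM i).mpr hi))).2
  have ha₁lt : a₁ < b₁ := by
    rcases lt_or_eq_of_le ha₁b₁ with h | h
    · exact h
    · exfalso
      refine hcommon' a₁ fun m hm => ?_
      have h3 := meets₁ m hm
      have h4 : g₁ m = a₁ := by omega
      exact h4 ▸ h3.2.2
  have ha₂lt : a₂ < b₂ := by
    rcases lt_or_eq_of_le ha₂b₂ with h | h
    · exact h
    · exfalso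
      refine hcommon' a₂ fun m hm => ?_
      have h3 := meets₂ m hm
      have h4 : g₂ m = a₂ := by omega
      exact h4 ▸ h3.2.2
  have K1 : ∀ s, s ∈ S i₁ → a₁ ≤ s → s ≤ b₁ → s = a₁ := fun s hs h1 h2 =>
    le_antisymm (hg₁_ge i₁ hi₁M s hs h2) h1
  have K2 : ∀ s, s ∈ S j₁ → s ≤ b₁ → s = b₁ := fun s hs h2 =>
    le_antisymm h2 (hgmin_le j₁ hj₁M s hs)
  have K3 : ∀ s, s ∈ S i₂ → a₂ ≤ s → s = a₂ := fun s hs h1 =>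
    le_antisymm (hle_gmax i₂ hi₂M s hs) h1
  have K4 : ∀ s, s ∈ S j₂ → a₂ ≤ s → s ≤ b₂ → s = b₂ := fun s hs h1 h2 =>
    le_antisymm h2 (hg₂_le j₂ hj₂M s hs h1)
  have hij₁ : i₁ ≠ j₁ := by
    intro h
    have := K2 a₁ (h ▸ ha₁S) ha₁b₁
    omega
  have hij₂ : i₂ ≠ j₂ := by
    intro h
    have := K4 a₂ (h ▸ ha₂S) le_rfl ha₂b₂
    omega
  obtain ⟨Q₁, hQ₁infix, hQ₁path, hQ₁supp⟩ :=
    LongestAux.segment hppath (le_of_lt ha₁lt) (show b₁ ≤ p.length by omega)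
  obtain ⟨Q₂, hQ₂infix, hQ₂path, hQ₂supp⟩ :=
    LongestAux.segment hppath (le_of_lt ha₂lt) (show b₂ ≤ p.length by omega)
  refine ⟨p.getVert a₁, p.getVert b₁, Q₁, p.getVert a₂, p.getVert b₂, Q₂, ?_, ?_, ?_, ?_⟩
  · refine ⟨hQ₁infix, i₁, j₁, (hmemM i₁).mp hi₁M, (hmemM j₁).mp hj₁M, hij₁,
      ((hmemS _ _).mp ha₁S).2, ((hmemS _ _).mp hb₁S).2, ?_, ?_⟩
    · intro m hm
      have hmM := (hmemM m).mpr hm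
      have h3 := meets₁ m hmM
      exact ⟨p.getVert (g₁ m), (hQ₁supp _).mpr ⟨g₁ m, h3.1, h3.2.1, rfl⟩,
        ((hmemS _ _).mp h3.2.2).2⟩
    · intro x hx hxa hxb
      obtain ⟨s, hs1, hs2, rfl⟩ := (hQ₁supp x).mp hx
      constructor
      · intro hmem
        have hsS : s ∈ S i₁ := (hmemS _ _).mpr ⟨by omega, hmem⟩
        exact hxa (by rw [K1 s hsS hs1 hs2])
      · intro hmem
        have hsS : s ∈ S j₁ := (hmemS _ _).mpr ⟨by omega, hmem⟩
        exact hxb (by rw [K2 s hsS hs2])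
  · refine ⟨hQ₂infix, i₂, j₂, (hmemM i₂).mp hi₂M, (hmemM j₂).mp hj₂M, hij₂,
      ((hmemS _ _).mp ha₂S).2, ((hmemS _ _).mp hb₂S).2, ?_, ?_⟩
    · intro m hm
      have hmM := (hmemM m).mpr hm
      have h3 := meets₂ m hmM
      exact ⟨p.getVert (g₂ m), (hQ₂supp _).mpr ⟨g₂ m, h3.1, h3.2.1, rfl⟩,
        ((hmemS _ _).mp h3.2.2).2⟩
    · intro x hx hxa hxb
      obtain ⟨s, hs1, hs2, rfl⟩ := (hQ₂supp x).mp hx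
      constructor
      · intro hmem
        have hsS : s ∈ S i₂ := (hmemS _ _).mpr ⟨by omega, hmem⟩
        exact hxa (by rw [K3 s hsS hs1])
      · intro hmem
        have hsS : s ∈ S j₂ := (hmemS _ _).mpr ⟨by omega, hmem⟩
        exact hxb (by rw [K4 s hsS hs1 hs2])
  · intro h
    have h1 : p.getVert a₁ = p.getVert a₂ := congrArg (fun z => z.1) h
    have h2 := LongestAux.getVert_inj hppath (show a₁ ≤ p.length by omega)
      (show a₂ ≤ p.length by omega) h1
    omega
  · intro e he1 he2
    revert he1 he2
    refine Sym2.ind (fun x y he1 he2 => ?_) e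
    have hadj : G.Adj x y := Q₁.adj_of_mem_edges he1
    have hxy : x ≠ y := hadj.ne
    have hx1 := Q₁.fst_mem_support_of_mem_edges he1
    have hy1 := Q₁.snd_mem_support_of_mem_edges he1
    have hx2 := Q₂.fst_mem_support_of_mem_edges he2
    have hy2 := Q₂.snd_mem_support_of_mem_edges he2
    obtain ⟨s, hs1, hs2, hxs⟩ := (hQ₁supp x).mp hx1
    obtain ⟨s', hs1', hs2', hxs'⟩ := (hQ₂supp x).mp hx2
    obtain ⟨t, ht1, ht2, hyt⟩ := (hQ₁supp y).mp hy1
    obtain ⟨t', ht1', ht2', hyt'⟩ := (hQ₂supp y).mp hy2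
    have hss' : s = s' := LongestAux.getVert_inj hppath (show s ≤ p.length by omega)
      (show s' ≤ p.length by omega) (hxs.trans hxs'.symm)
    have htt' : t = t' := LongestAux.getVert_inj hppath (show t ≤ p.length by omega)
      (show t' ≤ p.length by omega) (hyt.trans hyt'.symm)
    have hsb : s = b₁ := by omega
    have htb : t = b₁ := by omega
    exact hxy (by rw [← hxs, ← hyt, hsb, htb])
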